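/- Let R be a nonnull commutative ring, I an ideal, E = R[IZ] the Rees ring and Ê = R[Z⁻¹, IZ] the extended Rees ring inside R[Z, Z⁻¹]. Then E ∩ Z⁻¹Ê = IE, and this induces a ring isomorphism Ê/(Z⁻¹Ê) ≅ E/IE. -/

import Mathlib

open LaurentPolynomial AddMonoidAlgebra Finsupp

namespace ExtReesAux

variable {R : Type*} [CommRing R]

instance : CoeFun R[T;T⁻¹] (fun _ => ℤ → R) := ⟨fun f => f.coeff⟩

/-- `Finsupp.single` regarded as landing in Laurent polynomials. -/
noncomputable def sing (n : ℤ) (a : R) : R[T;T⁻¹] := AddMonoidAlgebra.single n a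

theorem sing_apply (m n : ℤ) (a : R) : sing m a n = if m = n then a else 0 :=
  Finsupp.single_apply

theorem sing_mul (m n : ℤ) (a b : R) : sing m a * sing n b = sing (m + n) (a * b) :=
  AddMonoidAlgebra.single_mul_single _ _ _ _

theorem sing_add (n : ℤ) (a b : R) : sing n (a + b) = sing n a + sing n b :=
  AddMonoidAlgebra.single_add _ _ _

theorem sing_zero (n : ℤ) : sing n (0 : R) = 0 := AddMonoidAlgebra.single_zero _

theorem T_eq_sing (n : ℤ) : (T n : R[T;T⁻¹]) = sing n 1 := rfl

theorem algebraMap_laurent (a : R) : algebraMap R R[T;T⁻¹] a = sing 0 a := by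
  rfl

theorem gen_eq (a : R) : algebraMap R R[T;T⁻¹] a * T 1 = sing 1 a := by
  rw [algebraMap_laurent, T_eq_sing, sing_mul]
  simp

theorem sum_sing (f : R[T;T⁻¹]) : ∑ n ∈ f.coeff.support, sing n (f n) = f :=
  AddMonoidAlgebra.sum_coeff_single f

theorem single_coeff_mem {P : ℤ → Ideal R} {m : ℤ} {a : R} (h : a ∈ P m) (n : ℤ) :
    sing m a n ∈ P n := by
  rw [sing_apply]
  split_ifs with hmn
  · exact hmn ▸ h
  · exact zero_mem _

theorem coeff_mul_mem {f g : R[T;T⁻¹]} (P Q S : ℤ → Ideal R)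
    (hf : ∀ n, f n ∈ P n) (hg : ∀ n, g n ∈ Q n)
    (hS : ∀ i j, P i * Q j ≤ S (i + j)) (n : ℤ) : (f * g) n ∈ S n := by
  classical
  rw [AddMonoidAlgebra.coeff_mul, Finsupp.sum]
  refine Submodule.sum_mem _ fun i hi => ?_
  rw [Finsupp.sum]
  refine Submodule.sum_mem _ fun j hj => ?_
  split_ifs with h
  · exact h ▸ hS i j (Ideal.mul_mem_mul (hf i) (hg j))
  · exact zero_mem _

variable (I : Ideal R)

def epow (n : ℤ) : Ideal R := if n < 0 then ⊥ else I ^ n.toNat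

def jpow (n : ℤ) : Ideal R := if n < 0 then ⊥ else I ^ (n.toNat + 1)

theorem hpow_mul_le (i j : ℤ) : I ^ i.toNat * I ^ j.toNat ≤ I ^ (i + j).toNat := by
  rw [← pow_add]
  exact Ideal.pow_le_pow_right (by omega)

theorem epow_mul_le (i j : ℤ) : epow I i * epow I j ≤ epow I (i + j) := by
  unfold epow
  rcases lt_or_ge i 0 with hi | hi
  · simp [hi]
  rcases lt_or_ge j 0 with hj | hj
  · simp [hj]
  · rw [if_neg (by omega), if_neg (by omega), if_neg (by omega)]
    exact hpow_mul_le I i j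

theorem epow_mul_jpow_le (i j : ℤ) : epow I i * jpow I j ≤ jpow I (i + j) := by
  unfold epow jpow
  rcases lt_or_ge i 0 with hi | hi
  · simp [hi]
  rcases lt_or_ge j 0 with hj | hj
  · simp [hj]
  · rw [if_neg (by omega), if_neg (by omega), if_neg (by omega), ← pow_add]
    exact Ideal.pow_le_pow_right (by omega)

theorem mem_pow_toNat_of_nonpos {n : ℤ} (hn : n ≤ 0) (a : R) : a ∈ I ^ n.toNat := by
  have : n.toNat = 0 := by omega
  rw [this, pow_zero, Ideal.one_eq_top]
  exact Submodule.mem_top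

theorem mem_epow_zero (a : R) : a ∈ epow I 0 := by simp [epow]

/-- The concrete Rees ring. -/
def eSA : Subalgebra R R[T;T⁻¹] where
  carrier := {f | ∀ n : ℤ, f n ∈ epow I n}
  mul_mem' {f g} hf hg := fun n =>
    coeff_mul_mem (epow I) (epow I) (epow I) hf hg (epow_mul_le I) n
  add_mem' {f g} hf hg := fun n => by
    rw [AddMonoidAlgebra.coeff_add, Finsupp.add_apply]; exact add_mem (hf n) (hg n)
  algebraMap_mem' r :=
    algebraMap_laurent (R := R) r ▸ fun n => single_coeff_mem (mem_epow_zero I r) n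

/-- The concrete extended Rees ring. -/
def hSA : Subalgebra R R[T;T⁻¹] where
  carrier := {f | ∀ n : ℤ, f n ∈ I ^ n.toNat}
  mul_mem' {f g} hf hg := fun n =>
    coeff_mul_mem (fun n => I ^ n.toNat) (fun n => I ^ n.toNat) (fun n => I ^ n.toNat)
      hf hg (hpow_mul_le I) n
  add_mem' {f g} hf hg := fun n => by
    rw [AddMonoidAlgebra.coeff_add, Finsupp.add_apply]; exact add_mem (hf n) (hg n)
  algebraMap_mem' r :=
    algebraMap_laurent (R := R) r ▸ fun n =>
      single_coeff_mem (P := fun n : ℤ => I ^ n.toNat) (m := 0)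
        (mem_pow_toNat_of_nonpos I le_rfl r) n

theorem mem_eSA_iff (f : R[T;T⁻¹]) : f ∈ eSA I ↔ ∀ n : ℤ, f n ∈ epow I n := Iff.rfl

theorem mem_hSA_iff (f : R[T;T⁻¹]) : f ∈ hSA I ↔ ∀ n : ℤ, f n ∈ I ^ n.toNat := Iff.rfl

theorem single_mem_adjoinE' (m : ℕ) (a : R) (ha : a ∈ I ^ m) :
    sing (m : ℤ) a ∈
      Algebra.adjoin R ((fun a : R => algebraMap R R[T;T⁻¹] a * T 1) '' ↑I) := by
  induction m generalizing a with
  | zero =>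
    have h1 : sing ((0 : ℕ) : ℤ) a = algebraMap R R[T;T⁻¹] a := by
      rw [algebraMap_laurent]; norm_num
    rw [h1]
    exact Subalgebra.algebraMap_mem _ a
  | succ m ih =>
    rw [pow_succ'] at ha
    refine Submodule.mul_induction_on ha ?_ ?_
    · intro b hb c hc
      have h1 : sing 1 b ∈
          Algebra.adjoin R ((fun a : R => algebraMap R R[T;T⁻¹] a * T 1) '' ↑I) := by
        rw [← gen_eq b]
        exact Algebra.subset_adjoin ⟨b, hb, rfl⟩
      have h2 : sing ((m + 1 : ℕ) : ℤ) (b * c) = sing 1 b * sing (m : ℤ) c := by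
        rw [sing_mul]
        congr 1
        push_cast
        ring
      rw [h2]
      exact mul_mem h1 (ih c hc)
    · intro x y hx hy
      rw [sing_add]
      exact add_mem hx hy

theorem single_mem_adjoinE {n : ℤ} (hn : 0 ≤ n) {a : R} (ha : a ∈ I ^ n.toNat) :
    sing n a ∈
      Algebra.adjoin R ((fun a : R => algebraMap R R[T;T⁻¹] a * T 1) '' ↑I) := by
  obtain ⟨m, rfl⟩ : ∃ m : ℕ, (m : ℤ) = n := ⟨n.toNat, Int.toNat_of_nonneg hn⟩
  rw [Int.toNat_natCast] at ha
  exact single_mem_adjoinE' I m a ha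

theorem single_mem_adjoinEhat_neg {n : ℤ} (hn : n < 0) (a : R) :
    sing n a ∈
      Algebra.adjoin R
        ({(T (-1) : R[T;T⁻¹])} ∪ (fun a : R => algebraMap R R[T;T⁻¹] a * T 1) '' ↑I) := by
  have h1 : (((-n).toNat : ℤ) * -1) = n := by omega
  have key : sing n a = algebraMap R R[T;T⁻¹] a * T (-1) ^ (-n).toNat := by
    rw [T_pow, h1, algebraMap_laurent, T_eq_sing, sing_mul, zero_add, mul_one]
  rw [key]
  refine mul_mem (Subalgebra.algebraMap_mem _ _) (pow_mem ?_ _)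
  refine Algebra.subset_adjoin ?_
  exact Set.mem_union_left _ rfl

theorem mem_adjoinE_iff (f : R[T;T⁻¹]) :
    f ∈ Algebra.adjoin R ((fun a : R => algebraMap R R[T;T⁻¹] a * T 1) '' ↑I) ↔
      ∀ n : ℤ, f n ∈ epow I n := by
  constructor
  · intro hf
    have hgen : ((fun a : R => algebraMap R R[T;T⁻¹] a * T 1) '' ↑I) ⊆ (eSA I : Set _) := by
      rintro x ⟨a, ha, rfl⟩
      have h1 : a ∈ epow I 1 := by simpa [epow] using ha
      have h2 : sing 1 a ∈ eSA I := fun n => single_coeff_mem h1 n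
      show algebraMap R R[T;T⁻¹] a * T 1 ∈ eSA I
      rw [gen_eq a]
      exact h2
    exact Algebra.adjoin_le hgen hf
  · intro hf
    rw [← sum_sing f]
    refine Subalgebra.sum_mem _ fun n hn => ?_
    rcases lt_or_ge n 0 with h | h
    · have h0 : f n = 0 := by
        have := hf n
        simpa [epow, h] using this
      rw [h0, sing_zero]
      exact zero_mem _
    · refine single_mem_adjoinE I h ?_
      have := hf n
      simpa [epow, not_lt.2 h] using this

theorem mem_adjoinEhat_iff (f : R[T;T⁻¹]) :
    f ∈ Algebra.adjoin R
        ({(T (-1) : R[T;T⁻¹])} ∪ (fun a : R => algebraMap R R[T;T⁻¹] a * T 1) '' ↑I) ↔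
      ∀ n : ℤ, f n ∈ I ^ n.toNat := by
  constructor
  · intro hf
    have hgen : ({(T (-1) : R[T;T⁻¹])} ∪
        (fun a : R => algebraMap R R[T;T⁻¹] a * T 1) '' ↑I) ⊆ (hSA I : Set _) := by
      rintro x (rfl | ⟨a, ha, rfl⟩)
      · show (T (-1) : R[T;T⁻¹]) ∈ hSA I
        rw [T_eq_sing]
        exact fun n => single_coeff_mem (P := fun n : ℤ => I ^ n.toNat) (m := -1)
          (mem_pow_toNat_of_nonpos I (by norm_num) 1) n
      · have h1 : a ∈ I ^ (1 : ℤ).toNat := by simpa using ha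
        show algebraMap R R[T;T⁻¹] a * T 1 ∈ hSA I
        rw [gen_eq a]
        exact fun n => single_coeff_mem (P := fun n : ℤ => I ^ n.toNat) (m := 1) h1 n
    exact Algebra.adjoin_le hgen hf
  · intro hf
    rw [← sum_sing f]
    refine Subalgebra.sum_mem _ fun n hn => ?_
    rcases lt_or_ge n 0 with h | h
    · exact single_mem_adjoinEhat_neg I h (f n)
    · exact Algebra.adjoin_mono Set.subset_union_right (single_mem_adjoinE I h (hf n))

theorem coe_algebraMap_sub (E : Subalgebra R R[T;T⁻¹]) (a : R) :
    ((algebraMap R ↥E a : ↥E) : R[T;T⁻¹]) = sing 0 a := by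
  rw [← algebraMap_laurent]
  rfl

set_option synthInstance.maxHeartbeats 1000000 in
set_option maxHeartbeats 2000000 in
theorem mem_mapI_iff (E : Subalgebra R R[T;T⁻¹])
    (hE : ∀ f : R[T;T⁻¹], f ∈ E ↔ ∀ n : ℤ, f n ∈ epow I n) (x : ↥E) :
    x ∈ I.map (algebraMap R ↥E) ↔ ∀ n : ℤ, (x : R[T;T⁻¹]) n ∈ jpow I n := by
  classical
  constructor
  · intro hx
    let J : Ideal ↥E :=
      { carrier := {y : ↥E | ∀ n : ℤ, (y : R[T;T⁻¹]) n ∈ jpow I n}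
        add_mem' := fun {y z} hy hz n => by
          rw [AddMemClass.coe_add, AddMonoidAlgebra.coeff_add, Finsupp.add_apply]
          exact add_mem (hy n) (hz n)
        zero_mem' := fun n => by
          rw [ZeroMemClass.coe_zero, AddMonoidAlgebra.coeff_zero, Finsupp.zero_apply]
          exact zero_mem _
        smul_mem' := fun c y hy n => by
          have hc : ∀ n : ℤ, ((c : R[T;T⁻¹])) n ∈ epow I n := (hE ↑c).mp c.2
          have hcy : ((c • y : ↥E) : R[T;T⁻¹]) = ↑c * ↑y := rfl
          rw [hcy]
          exact coeff_mul_mem (epow I) (jpow I) (jpow I) hc hy (epow_mul_jpow_le I) n }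
    have hle : I.map (algebraMap R ↥E) ≤ J := by
      rw [Ideal.map_le_iff_le_comap]
      intro a ha
      have ha0 : a ∈ jpow I 0 := by simpa [jpow] using ha
      intro n
      rw [coe_algebraMap_sub]
      exact single_coeff_mem ha0 n
    exact fun n => hle hx n
  · intro hx
    let K : Submodule R R[T;T⁻¹] :=
      Submodule.map (Subalgebra.val E).toLinearMap
        (Submodule.restrictScalars R (I.map (algebraMap R ↥E)))
    have hK : (x : R[T;T⁻¹]) ∈ K → x ∈ I.map (algebraMap R ↥E) := by
      intro h
      obtain ⟨w, hw, hwy⟩ := Submodule.mem_map.mp h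
      have hw' : w = x := Subtype.ext hwy
      exact hw' ▸ hw
    apply hK
    have hsing : ∀ (m : ℕ) (a : R), a ∈ I ^ (m + 1) → sing (m : ℤ) a ∈ K := by
      intro m a ha
      rw [pow_succ'] at ha
      refine Submodule.mul_induction_on ha ?_ ?_
      · intro b hb c hc
        have hc' : c ∈ epow I (m : ℤ) := by simpa [epow, not_lt.2 (Int.natCast_nonneg m)] using hc
        have hcE : sing (m : ℤ) c ∈ E := (hE _).mpr fun n => single_coeff_mem hc' n
        refine Submodule.mem_map.mpr
          ⟨algebraMap R ↥E b * ⟨sing (m : ℤ) c, hcE⟩, ?_, ?_⟩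
        · exact Ideal.mul_mem_right _ _ (Ideal.mem_map_of_mem _ hb)
        · show ((algebraMap R ↥E b * ⟨sing (m : ℤ) c, hcE⟩ : ↥E) : R[T;T⁻¹]) =
            sing (m : ℤ) (b * c)
          rw [MulMemClass.coe_mul, coe_algebraMap_sub]
          show sing 0 b * sing (m : ℤ) c = sing (m : ℤ) (b * c)
          rw [sing_mul, zero_add]
      · intro u v hu hv
        rw [sing_add]
        exact add_mem hu hv
    rw [← sum_sing (↑x : R[T;T⁻¹])]
    refine Submodule.sum_mem _ fun n hn => ?_
    rcases lt_or_ge n 0 with h | h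
    · have h0 : (↑x : R[T;T⁻¹]) n = 0 := by simpa [jpow, h] using hx n
      rw [h0, sing_zero]
      exact zero_mem _
    · obtain ⟨m, rfl⟩ : ∃ m : ℕ, (m : ℤ) = n := ⟨n.toNat, Int.toNat_of_nonneg h⟩
      refine hsing m _ ?_
      have := hx (m : ℤ)
      simpa [jpow, not_lt.2 (Int.natCast_nonneg m)] using this

theorem sing_mul_apply (m : ℤ) (a : R) (g : R[T;T⁻¹]) (n : ℤ) :
    (sing m a * g) n = a * g (-m + n) :=
  AddMonoidAlgebra.coeff_single_mul_apply g a m n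

set_option synthInstance.maxHeartbeats 1000000 in
set_option maxHeartbeats 2000000 in
theorem part1 (E Ehat : Subalgebra R R[T;T⁻¹])
    (hE : ∀ f : R[T;T⁻¹], f ∈ E ↔ ∀ n : ℤ, f n ∈ epow I n)
    (hEhat : ∀ f : R[T;T⁻¹], f ∈ Ehat ↔ ∀ n : ℤ, f n ∈ I ^ n.toNat)
    (f : R[T;T⁻¹]) :
    (f ∈ E ∧ ∃ g ∈ Ehat, f = T (-1) * g) ↔
      ∃ hf : f ∈ E, (⟨f, hf⟩ : E) ∈ I.map (algebraMap R ↥E) := by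
  constructor
  · rintro ⟨hf, g, hg, hfg⟩
    refine ⟨hf, (mem_mapI_iff I E hE _).mpr fun n => ?_⟩
    show f n ∈ jpow I n
    rcases lt_or_ge n 0 with h | h
    · have h1 := (hE f).mp hf n
      rw [epow, if_pos h] at h1
      rw [jpow, if_pos h]
      exact h1
    · have hco : f n = g (1 + n) := by
        have h2 : f n = (1 : R) * g (-(-1) + n) := by rw [hfg, T_eq_sing, sing_mul_apply]
        simpa using h2
      have hg' := (hEhat g).mp hg (1 + n)
      have ht : (1 + n).toNat = n.toNat + 1 := by omega
      rw [jpow, if_neg (not_lt.2 h), hco, ← ht]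
      exact hg'
  · rintro ⟨hf, hmap⟩
    have hco : ∀ n : ℤ, f n ∈ jpow I n := (mem_mapI_iff I E hE _).mp hmap
    refine ⟨hf, sing 1 1 * f, ?_, ?_⟩
    · refine (hEhat _).mpr fun n => ?_
      have h2 : (sing 1 (1 : R) * f) n = (1 : R) * f (-1 + n) := sing_mul_apply 1 1 f n
      rw [h2, one_mul]
      rcases le_or_gt n 0 with h | h
      · exact mem_pow_toNat_of_nonpos I h _
      · have h3 := hco (-1 + n)
        rw [jpow, if_neg (by omega)] at h3
        have ht : (-1 + n).toNat + 1 = n.toNat := by omega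
        exact ht ▸ h3
    · rw [← T_eq_sing, ← mul_assoc, ← T_add]
      norm_num

set_option synthInstance.maxHeartbeats 1000000 in
set_option maxHeartbeats 2000000 in
theorem part2 (E Ehat : Subalgebra R R[T;T⁻¹])
    (hE : ∀ f : R[T;T⁻¹], f ∈ E ↔ ∀ n : ℤ, f n ∈ epow I n)
    (hEhat : ∀ f : R[T;T⁻¹], f ∈ Ehat ↔ ∀ n : ℤ, f n ∈ I ^ n.toNat)
    (hle : E ≤ Ehat) (hz : (T (-1) : R[T;T⁻¹]) ∈ Ehat) :
    Nonempty ((↥Ehat ⧸ Ideal.span {(⟨T (-1), hz⟩ : ↥Ehat)}) ≃+*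
      (↥E ⧸ I.map (algebraMap R ↥E))) := by
  classical
  set z : ↥Ehat := ⟨T (-1), hz⟩ with hzdef
  let ψ : ↥E →+* ↥Ehat ⧸ Ideal.span {z} :=
    (Ideal.Quotient.mk (Ideal.span {z})).comp (Subalgebra.inclusion hle).toRingHom
  have hψ : ∀ y : ↥E, ψ y = Ideal.Quotient.mk _ (Subalgebra.inclusion hle y) := fun y => rfl
  have hsurj : Function.Surjective ψ := by
    intro q
    obtain ⟨x, rfl⟩ := Ideal.Quotient.mk_surjective q
    have he : AddMonoidAlgebra.ofCoeff (Finsupp.filter (fun n : ℤ => 0 ≤ n) (↑x : R[T;T⁻¹]).coeff) ∈ E := by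
      refine (hE _).mpr fun n => ?_
      rw [AddMonoidAlgebra.coeff_ofCoeff, Finsupp.filter_apply]
      split_ifs with h
      · rw [epow, if_neg (not_lt.2 h)]
        exact (hEhat _).mp x.2 n
      · exact zero_mem _
    set f : R[T;T⁻¹] := ↑x with hfdef
    set e : R[T;T⁻¹] := AddMonoidAlgebra.ofCoeff (Finsupp.filter (fun n : ℤ => 0 ≤ n) f.coeff) with hedef
    have hd : f - e ∈ Ehat := sub_mem x.2 (hle he)
    have hg : sing 1 1 * (f - e) ∈ Ehat := by
      refine (hEhat _).mpr fun n => ?_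
      have hco : (sing 1 (1 : R) * (f - e)) n = (1 : R) * (f - e) (-1 + n) :=
        sing_mul_apply 1 1 (f - e) n
      rw [hco, one_mul]
      rcases le_or_gt n 0 with h | h
      · exact mem_pow_toNat_of_nonpos I h _
      · have h0 : (f - e) (-1 + n) = 0 := by
          rw [AddMonoidAlgebra.coeff_sub, Finsupp.sub_apply, hedef, AddMonoidAlgebra.coeff_ofCoeff, Finsupp.filter_apply,
            if_pos (by omega : (0 : ℤ) ≤ -1 + n)]
          exact sub_self _
        rw [h0]
        exact zero_mem _
    refine ⟨⟨e, he⟩, ?_⟩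
    rw [hψ]
    refine (Ideal.Quotient.eq.mpr ?_).symm
    refine Ideal.mem_span_singleton.mpr ⟨⟨sing 1 1 * (f - e), hg⟩, ?_⟩
    apply Subtype.ext
    show f - e = T (-1) * (sing 1 1 * (f - e))
    rw [← T_eq_sing, ← mul_assoc, ← T_add]
    norm_num
  have hker : RingHom.ker ψ = I.map (algebraMap R ↥E) := by
    ext x
    rw [RingHom.mem_ker, hψ, Ideal.Quotient.eq_zero_iff_mem, Ideal.mem_span_singleton]
    constructor
    · rintro ⟨c, hc⟩
      have hfg : (x : R[T;T⁻¹]) = T (-1) * (c : R[T;T⁻¹]) := by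
        have h4 := congrArg Subtype.val hc
        exact h4
      obtain ⟨hf, hmem⟩ := (part1 I E Ehat hE hEhat ↑x).mp ⟨x.2, ↑c, c.2, hfg⟩
      exact hmem
    · intro hx
      obtain ⟨hfE, g, hg, hfg⟩ := (part1 I E Ehat hE hEhat ↑x).mpr ⟨x.2, hx⟩
      refine ⟨⟨g, hg⟩, Subtype.ext ?_⟩
      show (x : R[T;T⁻¹]) = T (-1) * g
      exact hfg
  exact ⟨(RingHom.quotientKerEquivOfSurjective hsurj).symm.trans (Ideal.quotEquivOfEq hker)⟩

end ExtReesAux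

set_option synthInstance.maxHeartbeats 1000000 in
set_option maxHeartbeats 4000000 in
/-- Let `R` be a nonnull ring, `I` an ideal, `E = R[IZ]` the Rees ring and
`Ê = R[Z⁻¹, IZ]` the extended Rees ring, both inside the Laurent polynomial ring
`R[Z, Z⁻¹]`.  Then `E ∩ Z⁻¹Ê = IE`, and this induces a ring isomorphism
`Ê/(Z⁻¹Ê) ≅ E/IE`. -/
theorem extended_rees_ring_quotient_iso
    (R : Type*) [CommRing R] [Nontrivial R] (I : Ideal R) :
    let Z : LaurentPolynomial R := LaurentPolynomial.T 1
    let Zinv : LaurentPolynomial R := LaurentPolynomial.T (-1)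
    -- the Rees ring `E = R[IZ]`:
    let E : Subalgebra R (LaurentPolynomial R) :=
      Algebra.adjoin R ((fun a : R => algebraMap R (LaurentPolynomial R) a * Z) '' ↑I)
    -- the extended Rees ring `Ê = R[Z⁻¹, IZ]`:
    let Ehat : Subalgebra R (LaurentPolynomial R) :=
      Algebra.adjoin R
        ({Zinv} ∪ (fun a : R => algebraMap R (LaurentPolynomial R) a * Z) '' ↑I)
    -- `E ∩ Z⁻¹Ê = IE`:
    (∀ f : LaurentPolynomial R,
      (f ∈ E ∧ ∃ g ∈ Ehat, f = Zinv * g) ↔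
      ∃ hf : f ∈ E, (⟨f, hf⟩ : E) ∈ I.map (algebraMap R ↥E)) ∧
    -- the induced isomorphism `Ê/(Z⁻¹Ê) ≅ E/IE`:
    Nonempty
      ((↥Ehat ⧸ Ideal.span
          {(⟨Zinv, Algebra.subset_adjoin (Set.mem_union_left _ rfl)⟩ : ↥Ehat)}) ≃+*
        (↥E ⧸ I.map (algebraMap R ↥E))) := by
  intro Z Zinv E Ehat
  constructor
  · intro f
    exact ExtReesAux.part1 I E Ehat (ExtReesAux.mem_adjoinE_iff I)
      (ExtReesAux.mem_adjoinEhat_iff I) f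
  · exact ExtReesAux.part2 I E Ehat (ExtReesAux.mem_adjoinE_iff I)
      (ExtReesAux.mem_adjoinEhat_iff I)
      (Algebra.adjoin_mono Set.subset_union_right)
      (Algebra.subset_adjoin (Set.mem_union_left _ rfl))
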